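/- arXiv:2003.05058 — 5 statements merged into one kernel-verified Lean document; each statement's English description precedes it below -/
import Mathlib

section
/- Let $K, t, P, \rho$ be positive integers with $t < K$, $\rho \le P$, and let $\alpha = \rho/P$. Suppose $q_1, \ldots, q_P$ are natural numbers with $0 \le q_p \le K$ and $\sum_{p=1}^P q_p = K\rho$. Then the total delivery latency $T_{sd} = \frac{1}{\rho \binom{K}{t}} \sum_{p=1}^P \left[\binom{K}{t+1} - \binom{K-q_p}{t+1}\right]$ satisfies $T_{sd} \ge \frac{K-t}{t+1}$, with equality when each $q_p \in \{0, K\}$. -/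
lemma choose_mul_aux (t m n : ℕ) (h : m ≤ n) :
    n * Nat.choose m (t+1) ≤ m * Nat.choose n (t+1) := by
  induction n, h using Nat.le_induction with
  | base => exact le_rfl
  | succ n hn ih =>
    have h1 : Nat.choose m (t+1) ≤ m * Nat.choose n t := by
      have h2 := Nat.choose_succ_right_eq m t
      have h3 : Nat.choose m t ≤ Nat.choose n t := Nat.choose_le_choose t hn
      have h4 : Nat.choose m (t+1) * (t+1) ≤ m * Nat.choose n t * (t+1) := by
        calc Nat.choose m (t+1) * (t+1) = Nat.choose m t * (m - t) := h2
          _ ≤ Nat.choose n t * m := Nat.mul_le_mul h3 (Nat.sub_le m t)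
          _ = m * Nat.choose n t * 1 := by ring
          _ ≤ m * Nat.choose n t * (t+1) := Nat.mul_le_mul_left _ (by omega)
      exact Nat.le_of_mul_le_mul_right h4 (by omega)
    calc (n+1) * Nat.choose m (t+1) = n * Nat.choose m (t+1) + Nat.choose m (t+1) := by ring
      _ ≤ m * Nat.choose n (t+1) + m * Nat.choose n t := Nat.add_le_add ih h1
      _ = m * Nat.choose (n+1) (t+1) := by rw [Nat.choose_succ_succ]; ring

theorem successive_latency_lower_bound (K t P ρ : ℕ) (q : Fin P → ℕ)
    (hK : 0 < K) (ht : t < K) (hρ : 0 < ρ) (hρP : ρ ≤ P)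
    (hqK : ∀ p, q p ≤ K) (hsum : ∑ p, q p = K * ρ) :
    (1 / ((ρ : ℚ) * Nat.choose K t)) *
        (∑ p, ((Nat.choose K (t + 1) : ℚ) - Nat.choose (K - q p) (t + 1)))
      ≥ ((K : ℚ) - t) / (t + 1)
    ∧ ((∀ p, q p = 0 ∨ q p = K) →
        (1 / ((ρ : ℚ) * Nat.choose K t)) *
            (∑ p, ((Nat.choose K (t + 1) : ℚ) - Nat.choose (K - q p) (t + 1)))
          = ((K : ℚ) - t) / (t + 1)) := by
  have hKQ : (0:ℚ) < K := by exact_mod_cast hK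
  have hρQ : (0:ℚ) < ρ := by exact_mod_cast hρ
  have hCt : (0:ℚ) < Nat.choose K t := by
    exact_mod_cast Nat.choose_pos ht.le
  have ht1 : (0:ℚ) < (t:ℚ) + 1 := by positivity
  -- the identity (K - t) * C(K,t) = (t+1) * C(K,t+1)
  have hid : ((K:ℚ) - t) * Nat.choose K t = ((t:ℚ) + 1) * Nat.choose K (t+1) := by
    have h := Nat.choose_succ_right_eq K t
    have hst : ((K - t : ℕ) : ℚ) = (K:ℚ) - t := by
      rw [Nat.cast_sub ht.le]
    have h' : (Nat.choose K (t+1) : ℚ) * ((t:ℚ)+1) = (Nat.choose K t : ℚ) * ((K:ℚ) - t) := by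
      rw [← hst]; exact_mod_cast h
    linarith [h']
  -- key inequality on the sum
  have key : (ρ:ℚ) * Nat.choose K (t+1)
      ≤ ∑ p, ((Nat.choose K (t + 1) : ℚ) - Nat.choose (K - q p) (t + 1)) := by
    have hterm : ∀ p : Fin P, (q p : ℚ) * Nat.choose K (t+1)
        ≤ (K:ℚ) * ((Nat.choose K (t + 1) : ℚ) - Nat.choose (K - q p) (t + 1)) := by
      intro p
      have h := choose_mul_aux t (K - q p) K (Nat.sub_le K (q p))
      have hcast : (K:ℚ) * Nat.choose (K - q p) (t+1)
          ≤ ((K:ℚ) - q p) * Nat.choose K (t+1) := by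
        have : ((K - q p : ℕ) : ℚ) = (K:ℚ) - q p := by rw [Nat.cast_sub (hqK p)]
        rw [← this]; exact_mod_cast h
      nlinarith [hcast]
    have h1 : (K:ℚ) * ((ρ:ℚ) * Nat.choose K (t+1))
        ≤ (K:ℚ) * ∑ p, ((Nat.choose K (t + 1) : ℚ) - Nat.choose (K - q p) (t + 1)) := by
      rw [Finset.mul_sum]
      calc (K:ℚ) * ((ρ:ℚ) * Nat.choose K (t+1))
          = (∑ p, (q p : ℚ)) * Nat.choose K (t+1) := by
            have : (∑ p, (q p : ℚ)) = ((K:ℚ) * ρ) := by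
              norm_cast
            rw [this]; ring
        _ = ∑ p, (q p : ℚ) * Nat.choose K (t+1) := by rw [Finset.sum_mul]
        _ ≤ _ := Finset.sum_le_sum (fun p _ => hterm p)
    exact le_of_mul_le_mul_left h1 hKQ
  constructor
  · rw [ge_iff_le, one_div_mul_eq_div, div_le_div_iff₀ ht1 (by positivity)]
    nlinarith [mul_le_mul_of_nonneg_right key ht1.le, hid, hρQ]
  · intro heq
    have hS : (∑ p, ((Nat.choose K (t + 1) : ℚ) - Nat.choose (K - q p) (t + 1)))
        = (ρ:ℚ) * Nat.choose K (t+1) := by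
      have hterm : ∀ p : Fin P, ((Nat.choose K (t + 1) : ℚ) - Nat.choose (K - q p) (t + 1))
          = (q p : ℚ) * Nat.choose K (t+1) / K := by
        intro p
        rcases heq p with h | h
        · simp [h]
        · rw [h, Nat.sub_self]
          simp [Nat.choose]
          field_simp
      rw [Finset.sum_congr rfl (fun p _ => hterm p), ← Finset.sum_div, ← Finset.sum_mul]
      have : (∑ p, (q p : ℚ)) = ((K:ℚ) * ρ) := by norm_cast
      rw [this]; field_simp
    rw [hS, one_div_mul_eq_div, div_eq_div_iff (by positivity) ht1.ne']
    nlinarith [hid]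
end

section
/- Let $K, t, P, \rho$ be positive integers with $t < K$, $\rho \le P$. Among all vectors $(q_1,\ldots,q_P)$ of natural numbers with $0 \le q_p \le K$ and $\sum_p q_p = K\rho$, the sum $\sum_{p=1}^P \binom{K-q_p}{t+1}$ is minimized by any vector satisfying $\max_p q_p \le \min_p q_p + 1$ (the most balanced allocation). -/
open Finset

private lemma bin_convex (r n1 n2 : ℕ) (h : n1 + 1 ≤ n2) :
    Nat.choose (n1 + 1) (r + 1) + Nat.choose (n2 - 1) (r + 1) ≤
      Nat.choose n1 (r + 1) + Nat.choose n2 (r + 1) := by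
  obtain ⟨m, rfl⟩ : ∃ m, n2 = m + 1 := ⟨n2 - 1, by omega⟩
  have e1 : Nat.choose (n1 + 1) (r + 1) = Nat.choose n1 r + Nat.choose n1 (r + 1) :=
    Nat.choose_succ_succ' n1 r
  have e2 : Nat.choose (m + 1) (r + 1) = Nat.choose m r + Nat.choose m (r + 1) :=
    Nat.choose_succ_succ' m r
  have hmono : Nat.choose n1 r ≤ Nat.choose m r := Nat.choose_le_choose r (by omega)
  simp only [Nat.add_sub_cancel]
  omega

private lemma choose_convex (K t a b : ℕ) (hab : b + 2 ≤ a) (haK : a ≤ K) :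
    Nat.choose (K - (a - 1)) (t + 1) + Nat.choose (K - (b + 1)) (t + 1) ≤
      Nat.choose (K - a) (t + 1) + Nat.choose (K - b) (t + 1) := by
  have h1 : K - (a - 1) = (K - a) + 1 := by omega
  have h2 : K - (b + 1) = (K - b) - 1 := by omega
  have h3 : (K - a) + 1 ≤ K - b := by omega
  rw [h1, h2]
  exact bin_convex t (K - a) (K - b) h3

private lemma sum_pair {P : ℕ} {p₁ p₂ : Fin P} (h : p₁ ≠ p₂) (g : Fin P → ℕ) :
    ∑ p, g p = g p₁ + g p₂ + ∑ p ∈ (Finset.univ.erase p₁).erase p₂, g p := by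
  have e1 : ∑ p, g p = g p₁ + ∑ p ∈ Finset.univ.erase p₁, g p :=
    (Finset.add_sum_erase _ g (mem_univ p₁)).symm
  have hmem : p₂ ∈ Finset.univ.erase p₁ := Finset.mem_erase.mpr ⟨h.symm, mem_univ _⟩
  have e2 : ∑ p ∈ Finset.univ.erase p₁, g p
      = g p₂ + ∑ p ∈ (Finset.univ.erase p₁).erase p₂, g p :=
    (Finset.add_sum_erase _ g hmem).symm
  rw [e1, e2, ← add_assoc]

private lemma balanced_sum_eq {P : ℕ} (hP : 0 < P) (f : ℕ → ℕ) (q : Fin P → ℕ)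
    (hbal : ∀ p₁ p₂, q p₁ ≤ q p₂ + 1) :
    ∑ p, f (q p) = ((∑ p, q p) % P) * f ((∑ p, q p) / P + 1)
      + (P - (∑ p, q p) % P) * f ((∑ p, q p) / P) := by
  have hne : (Finset.univ : Finset (Fin P)).Nonempty := ⟨⟨0, hP⟩, Finset.mem_univ _⟩
  obtain ⟨p₀, -, hmin⟩ := Finset.exists_min_image Finset.univ q hne
  set m := q p₀ with hm
  set A := Finset.univ.filter (fun p => q p = m + 1) with hA
  set B := Finset.univ.filter (fun p => ¬ q p = m + 1) with hB
  have hval : ∀ p, q p = m ∨ q p = m + 1 := fun p => by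
    have h1 := hmin p (Finset.mem_univ p); have h2 := hbal p p₀; omega
  have hp₀ : p₀ ∉ A := by simp [hA]; omega
  have hsub : A ⊆ Finset.univ.erase p₀ := fun x hx =>
    Finset.mem_erase.mpr ⟨by rintro rfl; exact hp₀ hx, mem_univ x⟩
  have hcard : A.card < P := by
    have h4 := Finset.card_le_card hsub
    have hc : (Finset.univ.erase p₀).card = P - 1 := by
      rw [Finset.card_erase_of_mem (mem_univ p₀)]; simp
    omega
  have hAval : ∀ p ∈ A, q p = m + 1 := fun p hp => (Finset.mem_filter.mp hp).2
  have hBval : ∀ p ∈ B, q p = m := fun p hp => by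
    have h5 := (Finset.mem_filter.mp hp).2; have h6 := hval p; omega
  have hcardAB : A.card + B.card = P := by
    have h7 := Finset.card_filter_add_card_filter_not
      (s := (Finset.univ : Finset (Fin P))) (p := fun p => q p = m + 1)
    simpa [hA, hB] using h7
  have hsA : ∑ p ∈ A, q p = A.card * (m + 1) := by
    rw [Finset.sum_congr rfl hAval, Finset.sum_const, smul_eq_mul]
  have hsB : ∑ p ∈ B, q p = B.card * m := by
    rw [Finset.sum_congr rfl hBval, Finset.sum_const, smul_eq_mul]
  have hsplitq : ∑ p ∈ A, q p + ∑ p ∈ B, q p = ∑ p, q p :=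
    Finset.sum_filter_add_sum_filter_not Finset.univ _ q
  have hsum : ∑ p, q p = A.card + P * m := by
    have hx : A.card * (m + 1) + B.card * m = A.card + (A.card + B.card) * m := by ring
    rw [← hsplitq, hsA, hsB, hx, hcardAB]
  have hmod : (∑ p, q p) % P = A.card := by
    rw [hsum, Nat.add_mul_mod_self_left, Nat.mod_eq_of_lt hcard]
  have hdiv : (∑ p, q p) / P = m := by
    rw [hsum, Nat.add_mul_div_left _ _ hP, Nat.div_eq_of_lt hcard, Nat.zero_add]
  have hfA : ∑ p ∈ A, f (q p) = A.card * f (m + 1) := by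
    rw [Finset.sum_congr rfl (fun p hp => by rw [hAval p hp]), Finset.sum_const, smul_eq_mul]
  have hfB : ∑ p ∈ B, f (q p) = B.card * f m := by
    rw [Finset.sum_congr rfl (fun p hp => by rw [hBval p hp]), Finset.sum_const, smul_eq_mul]
  have hsplitf : ∑ p ∈ A, f (q p) + ∑ p ∈ B, f (q p) = ∑ p, f (q p) :=
    Finset.sum_filter_add_sum_filter_not Finset.univ _ (fun p => f (q p))
  have hBcard : B.card = P - A.card := by omega
  rw [hmod, hdiv, ← hsplitf, hfA, hfB, hBcard]

private lemma main_aux (K t : ℕ) {P : ℕ} (hP : 0 < P) :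
    ∀ n (q' : Fin P → ℕ), (∑ p, q' p * q' p) ≤ n → (∀ p, q' p ≤ K) →
    ((∑ p, q' p) % P) * Nat.choose (K - ((∑ p, q' p) / P + 1)) (t + 1)
      + (P - (∑ p, q' p) % P) * Nat.choose (K - (∑ p, q' p) / P) (t + 1)
      ≤ ∑ p, Nat.choose (K - q' p) (t + 1) := by
  intro n
  induction n with
  | zero =>
    intro q' hsq hKb
    have hz : ∀ p, q' p = 0 := fun p => by
      have h1 : ∀ p ∈ (Finset.univ : Finset (Fin P)), q' p * q' p = 0 := by
        rw [← Finset.sum_eq_zero_iff]; omega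
      have h2 := h1 p (mem_univ p)
      rcases Nat.mul_eq_zero.mp h2 with h | h <;> exact h
    have hbal : ∀ p₁ p₂, q' p₁ ≤ q' p₂ + 1 := fun p₁ p₂ => by rw [hz, hz]; omega
    exact (balanced_sum_eq hP (fun x => Nat.choose (K - x) (t + 1)) q' hbal).ge
  | succ n ih =>
    intro q' hsq hKb
    by_cases hbal : ∀ p₁ p₂, q' p₁ ≤ q' p₂ + 1
    · exact (balanced_sum_eq hP (fun x => Nat.choose (K - x) (t + 1)) q' hbal).ge
    · push_neg at hbal
      obtain ⟨p₁, p₂, hgt⟩ := hbal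
      have hgt2 : q' p₂ + 2 ≤ q' p₁ := by omega
      have hne : p₁ ≠ p₂ := by rintro rfl; omega
      set q'' := Function.update (Function.update q' p₁ (q' p₁ - 1)) p₂ (q' p₂ + 1) with hq''
      have h1 : q'' p₁ = q' p₁ - 1 := by
        rw [hq'', Function.update_of_ne hne, Function.update_self]
      have h2 : q'' p₂ = q' p₂ + 1 := by rw [hq'', Function.update_self]
      have h3 : ∀ p ∈ (Finset.univ.erase p₁).erase p₂, q'' p = q' p := by
        intro p hp
        rw [Finset.mem_erase] at hp
        obtain ⟨hp2, hp1⟩ := hp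
        rw [Finset.mem_erase] at hp1
        rw [hq'', Function.update_of_ne hp2, Function.update_of_ne hp1.1]
      have hsum_eq : ∑ p, q'' p = ∑ p, q' p := by
        rw [sum_pair hne q'', sum_pair hne q', h1, h2,
          show (∑ p ∈ (Finset.univ.erase p₁).erase p₂, q'' p)
            = ∑ p ∈ (Finset.univ.erase p₁).erase p₂, q' p from Finset.sum_congr rfl h3]
        omega
      have hsq' : ∑ p, q'' p * q'' p ≤ n := by
        rw [sum_pair hne (fun p => q' p * q' p)] at hsq
        rw [sum_pair hne (fun p => q'' p * q'' p), h1, h2,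
          show (∑ p ∈ (Finset.univ.erase p₁).erase p₂, q'' p * q'' p)
            = ∑ p ∈ (Finset.univ.erase p₁).erase p₂, q' p * q' p from
            Finset.sum_congr rfl (fun p hp => by rw [h3 p hp])]
        obtain ⟨c, hc⟩ : ∃ c, q' p₁ = q' p₂ + 2 + c := ⟨q' p₁ - (q' p₂ + 2), by omega⟩
        rw [hc] at hsq ⊢
        rw [show q' p₂ + 2 + c - 1 = q' p₂ + 1 + c from by omega]
        have key : (q' p₂ + 1 + c) * (q' p₂ + 1 + c) + (q' p₂ + 1) * (q' p₂ + 1) + 1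
            ≤ (q' p₂ + 2 + c) * (q' p₂ + 2 + c) + q' p₂ * q' p₂ := by nlinarith
        omega
      have hK'' : ∀ p, q'' p ≤ K := by
        intro p
        by_cases hp2 : p = p₂
        · rw [hp2, h2]; have := hKb p₁; omega
        · by_cases hp1 : p = p₁
          · rw [hp1, h1]; have := hKb p₁; omega
          · rw [hq'', Function.update_of_ne hp2, Function.update_of_ne hp1]; exact hKb p
      have hf : ∑ p, Nat.choose (K - q'' p) (t + 1) ≤ ∑ p, Nat.choose (K - q' p) (t + 1) := by
        rw [sum_pair hne (fun p => Nat.choose (K - q'' p) (t + 1)),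
          sum_pair hne (fun p => Nat.choose (K - q' p) (t + 1)), h1, h2,
          show (∑ p ∈ (Finset.univ.erase p₁).erase p₂, Nat.choose (K - q'' p) (t + 1))
            = ∑ p ∈ (Finset.univ.erase p₁).erase p₂, Nat.choose (K - q' p) (t + 1) from
            Finset.sum_congr rfl (fun p hp => by rw [h3 p hp])]
        have := choose_convex K t (q' p₁) (q' p₂) hgt2 (hKb p₁)
        omega
      have hmain := ih q'' hsq' hK''
      rw [hsum_eq] at hmain
      exact le_trans hmain hf

theorem balanced_minimizes_choose_sum (K t P ρ : ℕ) (hK : 0 < K) (ht : t < K)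
    (hρ : 0 < ρ) (hρP : ρ ≤ P) (q q' : Fin P → ℕ)
    (hq : ∀ p, q p ≤ K) (hq' : ∀ p, q' p ≤ K)
    (hsum : ∑ p, q p = K * ρ) (hsum' : ∑ p, q' p = K * ρ)
    (hbal : ∀ p₁ p₂, q p₁ ≤ q p₂ + 1) :
    ∑ p, Nat.choose (K - q p) (t + 1) ≤ ∑ p, Nat.choose (K - q' p) (t + 1) := by
  have hP : 0 < P := lt_of_lt_of_le hρ hρP
  have hL := balanced_sum_eq hP (fun x => Nat.choose (K - x) (t + 1)) q hbal
  have hR := main_aux K t hP (∑ p, q' p * q' p) q' le_rfl hq'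
  rw [hsum] at hL
  rw [hsum'] at hR
  rw [hL]
  exact hR
end

section
/- Let $K, t, P, \rho$ be positive integers with $t < K$, $\rho \le P$, $\alpha = \rho/P$, and $w_i = \binom{K}{i}\alpha^i(1-\alpha)^{K-i}$. Then $\frac{1}{\alpha}\frac{K-t}{t+1} - \frac{1}{\alpha \binom{K}{t}} \sum_{i=0}^{K} w_i \binom{K-i}{t+1} = \frac{K-t}{t+1} \cdot \frac{1 - (1-\alpha)^{t+1}}{\alpha}$. -/
lemma key_choose (K t i : ℕ) (ht : t < K) :
    K.choose i * (K - i).choose (t + 1) = K.choose (t + 1) * (K - t - 1).choose i := by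
  rcases le_or_gt (i + (t + 1)) K with h | h
  · have h1 := Nat.choose_mul (n := K) (k := i + (t + 1)) (s := i) (by omega)
    have h2 := Nat.choose_mul (n := K) (k := i + (t + 1)) (s := t + 1) (by omega)
    have hsym : (i + (t + 1)).choose i = (i + (t + 1)).choose (t + 1) := by
      have := Nat.choose_symm (n := i + (t + 1)) (k := i) (by omega)
      simpa [Nat.add_sub_cancel_left] using this.symm
    rw [Nat.add_sub_cancel_left] at h1
    rw [Nat.add_sub_cancel] at h2
    have hKs : K - (t + 1) = K - t - 1 := by omega
    rw [hKs] at h2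
    rw [← h1, hsym, h2]
  · rcases le_or_gt i K with hi | hi
    · have h1 : (K - i).choose (t + 1) = 0 := Nat.choose_eq_zero_of_lt (by omega)
      have h2 : (K - t - 1).choose i = 0 := Nat.choose_eq_zero_of_lt (by omega)
      rw [h1, h2]; ring
    · have h1 : K.choose i = 0 := Nat.choose_eq_zero_of_lt hi
      have h2 : (K - t - 1).choose i = 0 := Nat.choose_eq_zero_of_lt (by omega)
      rw [h1, h2]; ring

lemma key_sum (K t : ℕ) (ht : t < K) (α : ℝ) :
    ∑ i ∈ Finset.range (K + 1),
        (Nat.choose K i : ℝ) * α ^ i * (1 - α) ^ (K - i) * Nat.choose (K - i) (t + 1)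
      = (Nat.choose K (t + 1) : ℝ) * (1 - α) ^ (t + 1) := by
  have hstep : ∀ i ∈ Finset.range (K + 1),
      (Nat.choose K i : ℝ) * α ^ i * (1 - α) ^ (K - i) * Nat.choose (K - i) (t + 1)
        = (Nat.choose K (t + 1) : ℝ) * (1 - α) ^ (t + 1) *
            ((Nat.choose (K - t - 1) i : ℝ) * α ^ i * (1 - α) ^ (K - t - 1 - i)) := by
    intro i hi
    rcases le_or_gt i (K - t - 1) with hle | hlt
    · have hpow : (1 - α) ^ (K - i) = (1 - α) ^ (t + 1) * (1 - α) ^ (K - t - 1 - i) := by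
        rw [← pow_add]; congr 1; omega
      have hc : (Nat.choose K i : ℝ) * Nat.choose (K - i) (t + 1)
          = (Nat.choose K (t + 1) : ℝ) * Nat.choose (K - t - 1) i := by
        exact_mod_cast congrArg (Nat.cast : ℕ → ℝ) (key_choose K t i ht)
      rw [hpow]
      linear_combination (α ^ i * ((1 - α) ^ (t + 1) * (1 - α) ^ (K - t - 1 - i))) * hc
    · have h0 : Nat.choose (K - t - 1) i = 0 := Nat.choose_eq_zero_of_lt hlt
      have h1 : Nat.choose (K - i) (t + 1) = 0 := by
        simp only [Finset.mem_range] at hi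
        exact Nat.choose_eq_zero_of_lt (by omega)
      rw [h0, h1]; simp
  rw [Finset.sum_congr rfl hstep, ← Finset.mul_sum]
  have hsub : ∑ i ∈ Finset.range (K + 1),
      (Nat.choose (K - t - 1) i : ℝ) * α ^ i * (1 - α) ^ (K - t - 1 - i)
      = ∑ i ∈ Finset.range (K - t - 1 + 1),
      (Nat.choose (K - t - 1) i : ℝ) * α ^ i * (1 - α) ^ (K - t - 1 - i) := by
    apply (Finset.sum_subset (by intro x hx; simp at hx ⊢; omega) ?_).symm
    intro x hx hnx
    simp only [Finset.mem_range] at hx hnx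
    rw [Nat.choose_eq_zero_of_lt (by omega)]; simp
  have hbin : ∑ i ∈ Finset.range (K - t - 1 + 1),
      (Nat.choose (K - t - 1) i : ℝ) * α ^ i * (1 - α) ^ (K - t - 1 - i) = 1 := by
    have h := add_pow α (1 - α) (K - t - 1)
    have h1 : α + (1 - α) = 1 := by ring
    rw [h1, one_pow] at h
    refine Eq.trans ?_ h.symm
    exact Finset.sum_congr rfl fun i _ => by ring
  rw [hsub, hbin]; ring

theorem average_latency_closed_form (K t P ρ : ℕ) (hK : 0 < K) (ht : t < K)
    (hρ : 0 < ρ) (hρP : ρ ≤ P) (α : ℝ) (hα : α = (ρ : ℝ) / P)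
    (w : ℕ → ℝ) (hw : ∀ i, w i = (Nat.choose K i : ℝ) * α ^ i * (1 - α) ^ (K - i)) :
    (1 / α) * (((K : ℝ) - t) / (t + 1))
      - (1 / (α * Nat.choose K t)) *
          (∑ i ∈ Finset.range (K + 1), w i * Nat.choose (K - i) (t + 1))
    = (((K : ℝ) - t) / (t + 1)) * ((1 - (1 - α) ^ (t + 1)) / α) := by
  have hαpos : 0 < α := by
    rw [hα]
    exact div_pos (by exact_mod_cast hρ) (by exact_mod_cast lt_of_lt_of_le hρ hρP)
  have hsum : (∑ i ∈ Finset.range (K + 1), w i * Nat.choose (K - i) (t + 1))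
      = (Nat.choose K (t + 1) : ℝ) * (1 - α) ^ (t + 1) := by
    rw [← key_sum K t ht α]
    exact Finset.sum_congr rfl fun i _ => by rw [hw i]
  rw [hsum]
  have hCt : (0 : ℝ) < Nat.choose K t := by
    exact_mod_cast Nat.choose_pos ht.le
  have hrel : (Nat.choose K (t + 1) : ℝ) * (t + 1) = (Nat.choose K t : ℝ) * ((K : ℝ) - t) := by
    have := Nat.choose_succ_right_eq K t
    have h2 : ((K : ℝ) - t) = ((K - t : ℕ) : ℝ) := by
      rw [Nat.cast_sub ht.le]
    rw [h2]
    exact_mod_cast this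
  have ht1 : ((t : ℝ) + 1) ≠ 0 := by positivity
  have hC1 : (Nat.choose K (t + 1) : ℝ) = (Nat.choose K t : ℝ) * ((K : ℝ) - t) / ((t : ℝ) + 1) := by
    rw [eq_div_iff ht1]; linarith [hrel]
  rw [hC1]
  field_simp
end

section
/- Consider the linear program: minimize $\sum_{i=0}^{K} c_i x_i$ over nonnegative reals $x_0,\ldots,x_K$ subject to $\sum_{i=0}^K x_i \ge F$ and $\sum_{i=0}^K i\, x_i \le tF$, where $t \in \{0,\ldots,K\}$ is an integer and the coefficients $c_i = \sum_{p=1}^P \frac{\binom{K}{i+1}-\binom{K-q_p}{i+1}}{\rho\binom{K}{i}}$ are such that the sequence $(c_i)$ is nonincreasing and convex in $i$. Then an optimal solution is $x_t = F$, $x_i = 0$ for $i \ne t$, and the optimal value is $\sum_{p=1}^P \frac{\binom{K}{t+1}-\binom{K-q_p}{t+1}}{\rho\binom{K}{t}} \cdot F$. -/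
theorem lower_bound_linear_program (K t P ρ : ℕ) (ht : t ≤ K) (hρ : 0 < ρ)
    (hρP : ρ ≤ P) (q : Fin P → ℕ) (hq : ∀ p, q p ≤ K)
    (F : ℚ) (hF : 0 < F) (c : ℕ → ℚ)
    (hc : ∀ i, c i = ∑ p, ((Nat.choose K (i + 1) : ℚ) - Nat.choose (K - q p) (i + 1))
        / ((ρ : ℚ) * Nat.choose K i))
    (hmono : ∀ i, i < K → c (i + 1) ≤ c i)
    (hconv : ∀ i, i + 2 ≤ K → c i + c (i + 2) ≥ 2 * c (i + 1)) :
    (∀ x : ℕ → ℚ, (∀ i, 0 ≤ x i) →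
        F ≤ ∑ i ∈ Finset.range (K + 1), x i →
        ∑ i ∈ Finset.range (K + 1), (i : ℚ) * x i ≤ (t : ℚ) * F →
        c t * F ≤ ∑ i ∈ Finset.range (K + 1), c i * x i)
    ∧ c t * F = (∑ p, ((Nat.choose K (t + 1) : ℚ) - Nat.choose (K - q p) (t + 1))
        / ((ρ : ℚ) * Nat.choose K t)) * F := by
  -- c K = 0
  have hcK : c K = 0 := by
    rw [hc K]
    apply Finset.sum_eq_zero
    intro p _
    rw [Nat.choose_eq_zero_of_lt (by omega), Nat.choose_eq_zero_of_lt (by omega)]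
    simp
  -- c is nonnegative on [0, K]
  have hdown : ∀ d : ℕ, 0 ≤ c (K - d) := by
    intro d
    induction d with
    | zero => simp [hcK]
    | succ d ih =>
      by_cases h : K ≤ d
      · have : K - (d + 1) = K - d := by omega
        rw [this]; exact ih
      · have h1 : K - (d + 1) < K := by omega
        have h2 : K - (d + 1) + 1 = K - d := by omega
        have := hmono (K - (d + 1)) h1
        rw [h2] at this
        linarith
  have hcnonneg : ∀ i, i ≤ K → 0 ≤ c i := by
    intro i hi
    have : i = K - (K - i) := by omega
    rw [this]; exact hdown (K - i)
  -- slopes are monotone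
  have hslope : ∀ j k, j ≤ k → k < K → c (j + 1) - c j ≤ c (k + 1) - c k := by
    intro j k hjk hk
    induction k with
    | zero => interval_cases j; exact le_refl _
    | succ k ih =>
      rcases Nat.lt_or_ge j (k + 1) with h | h
      · have hkK : k < K := by omega
        have step : c (k + 1) - c k ≤ c (k + 2) - c (k + 1) := by
          have := hconv k (by omega)
          linarith
        have := ih (by omega) (by omega)
        linarith
      · have : j = k + 1 := by omega
        subst this; exact le_refl _
  constructor
  · intro x hx hS hT
    set S := ∑ i ∈ Finset.range (K + 1), x i with hSdef
    set T := ∑ i ∈ Finset.range (K + 1), (i : ℚ) * x i with hTdef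
    by_cases htK : t = K
    · -- c t = 0, everything nonneg
      rw [htK, hcK, zero_mul]
      apply Finset.sum_nonneg
      intro i hi
      have hiK : i ≤ K := by have := Finset.mem_range.mp hi; omega
      exact mul_nonneg (hcnonneg i hiK) (hx i)
    · have htK' : t < K := lt_of_le_of_ne ht htK
      set m := c (t + 1) - c t with hm
      have hm0 : m ≤ 0 := by
        have := hmono t htK'
        simp [hm]; linarith
      -- supporting line: ∀ i ≤ K, c t + m * (i - t) ≤ c i
      have hup : ∀ i, t ≤ i → i ≤ K → c t + m * ((i : ℚ) - t) ≤ c i := by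
        intro i hti hiK
        induction i, hti using Nat.le_induction with
        | base => simp
        | succ i hti ih =>
          have hiK' : i < K := by omega
          have hs := hslope t i hti hiK'
          have := ih (by omega)
          push_cast
          nlinarith
      have hdn : ∀ d, d ≤ t → c t + m * (((t - d : ℕ) : ℚ) - t) ≤ c (t - d) := by
        intro d hd
        induction d with
        | zero => simp
        | succ d ih =>
          have hd' : d ≤ t := by omega
          have ih' := ih hd'
          have h1 : t - (d + 1) < K := by omega
          have h2 : t - (d + 1) + 1 = t - d := by omega
          have hs := hslope (t - (d + 1)) t (by omega) htK'
          rw [h2] at hs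
          have e1 : ((t - d : ℕ) : ℚ) = (t : ℚ) - d := by
            have : (t - d : ℕ) = t - d := rfl
            push_cast [Nat.cast_sub hd']; ring
          have e2 : ((t - (d + 1) : ℕ) : ℚ) = (t : ℚ) - d - 1 := by
            push_cast [Nat.cast_sub hd]; ring
          rw [e2]; rw [e1] at ih'
          nlinarith
      have hsupp : ∀ i, i ≤ K → c t + m * ((i : ℚ) - t) ≤ c i := by
        intro i hi
        rcases le_or_gt t i with h | h
        · exact hup i h hi
        · have hd : t - (t - i) = i := by omega
          have := hdn (t - i) (by omega)
          rw [hd] at this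
          exact this
      have key : ∑ i ∈ Finset.range (K + 1), (c t + m * ((i : ℚ) - t)) * x i
          ≤ ∑ i ∈ Finset.range (K + 1), c i * x i := by
        apply Finset.sum_le_sum
        intro i hi
        have hiK : i ≤ K := by have := Finset.mem_range.mp hi; omega
        exact mul_le_mul_of_nonneg_right (hsupp i hiK) (hx i)
      have expand : ∑ i ∈ Finset.range (K + 1), (c t + m * ((i : ℚ) - t)) * x i
          = c t * S + m * T - m * t * S := by
        have h : ∀ i ∈ Finset.range (K + 1), (c t + m * ((i : ℚ) - t)) * x i
            = c t * x i + m * ((i : ℚ) * x i) - m * t * x i := by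
          intro i _; ring
        rw [Finset.sum_congr rfl h, Finset.sum_sub_distrib, Finset.sum_add_distrib,
          ← Finset.mul_sum, ← Finset.mul_sum, ← Finset.mul_sum]
      have hct : 0 ≤ c t := hcnonneg t ht
      have final : c t * F ≤ c t * S + m * T - m * t * S := by
        nlinarith [mul_nonneg hct (sub_nonneg.2 hS),
          mul_nonneg (neg_nonneg.2 hm0) (sub_nonneg.2 hT),
          mul_nonneg (mul_nonneg (neg_nonneg.2 hm0) (Nat.cast_nonneg t : (0:ℚ) ≤ t)) (sub_nonneg.2 hS)]
      linarith [key, expand.symm.le]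
  · rw [hc t]
end

section
/- Let $K, t$ be natural numbers with $t+1 \le K$ and $0 \le q \le K$. Then $\frac{\binom{K}{t+1} - \binom{K-q}{t+1}}{\binom{K}{t}}$ is nonincreasing in $t$ (for fixed $K, q$) and nondecreasing in $q$ (for fixed $K, t$). -/
lemma sum_choose_telescope (t m K : ℕ) (h : m ≤ K) :
    (Nat.choose K (t+1) : ℚ) - Nat.choose m (t+1)
      = ∑ j ∈ Finset.Ico m K, (Nat.choose j t : ℚ) := by
  induction K, h using Nat.le_induction with
  | base => simp
  | succ n hn ih =>
      rw [Finset.sum_Ico_succ_top (by omega), ← ih, Nat.choose_succ_succ n t]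
      push_cast
      ring

lemma cross_ineq (K j t : ℕ) (hj : j < K) :
    Nat.choose j (t+1) * Nat.choose K t ≤ Nat.choose j t * Nat.choose K (t+1) := by
  refine Nat.le_of_mul_le_mul_right ?_ (show 0 < t + 1 by omega)
  have h1 : Nat.choose j (t+1) * (t+1) = Nat.choose j t * (j - t) :=
    Nat.choose_succ_right_eq j t
  have h2 : Nat.choose K (t+1) * (t+1) = Nat.choose K t * (K - t) :=
    Nat.choose_succ_right_eq K t
  calc Nat.choose j (t+1) * Nat.choose K t * (t+1)
      = Nat.choose j (t+1) * (t+1) * Nat.choose K t := by ring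
    _ = Nat.choose j t * (j - t) * Nat.choose K t := by rw [h1]
    _ ≤ Nat.choose j t * (K - t) * Nat.choose K t := by
        apply Nat.mul_le_mul_right; apply Nat.mul_le_mul_left; omega
    _ = Nat.choose j t * (Nat.choose K (t+1) * (t+1)) := by rw [h2]; ring
    _ = Nat.choose j t * Nat.choose K (t+1) * (t+1) := by ring

theorem server_rate_monotonicity (K : ℕ) :
    (∀ t q : ℕ, t + 2 ≤ K → q ≤ K →
      ((Nat.choose K (t + 2) : ℚ) - Nat.choose (K - q) (t + 2)) / Nat.choose K (t + 1)
        ≤ ((Nat.choose K (t + 1) : ℚ) - Nat.choose (K - q) (t + 1)) / Nat.choose K t)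
    ∧ (∀ t q : ℕ, t + 1 ≤ K → q + 1 ≤ K →
      ((Nat.choose K (t + 1) : ℚ) - Nat.choose (K - q) (t + 1)) / Nat.choose K t
        ≤ ((Nat.choose K (t + 1) : ℚ) - Nat.choose (K - (q + 1)) (t + 1)) / Nat.choose K t) := by
  constructor
  · intro t q h1 h2
    set m := K - q with hm
    have hmK : m ≤ K := Nat.sub_le _ _
    have e1 : ((Nat.choose K (t + 2) : ℚ) - Nat.choose m (t + 2))
        = ∑ j ∈ Finset.Ico m K, (Nat.choose j (t+1) : ℚ) :=
      sum_choose_telescope (t+1) m K hmK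
    have e2 : ((Nat.choose K (t + 1) : ℚ) - Nat.choose m (t + 1))
        = ∑ j ∈ Finset.Ico m K, (Nat.choose j t : ℚ) :=
      sum_choose_telescope t m K hmK
    rw [e1, e2, Finset.sum_div, Finset.sum_div]
    apply Finset.sum_le_sum
    intro j hj
    rw [Finset.mem_Ico] at hj
    have hd1 : (0:ℚ) < Nat.choose K (t+1) := by
      exact_mod_cast Nat.choose_pos (by omega)
    have hd2 : (0:ℚ) < Nat.choose K t := by
      exact_mod_cast Nat.choose_pos (by omega)
    rw [div_le_div_iff₀ hd1 hd2]
    have := cross_ineq K j t hj.2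
    exact_mod_cast this
  · intro t q h1 h2
    have hd : (0:ℚ) < Nat.choose K t := by
      exact_mod_cast Nat.choose_pos (by omega)
    have hle : (Nat.choose (K - (q+1)) (t+1) : ℚ) ≤ Nat.choose (K - q) (t+1) := by
      exact_mod_cast Nat.choose_le_choose (t+1) (Nat.sub_le_sub_left (by omega) K)
    gcongr
end
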